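/- If H_max is at least the makespan of some joint trajectory achieving the minimum sum of costs, then the minimum of the finite-horizon cost J_{H_max} over conflict-free H_max-step joint trajectories equals the optimal sum of costs SOC* of the MAPF instance. Precisely: (a) for every conflict-free H_max-step joint trajectory whose agents all end at their goals and have the stay-at-goal property, J_{H_max} equals its SOC; and (b) hence min J_{H_max} over such trajectories = min SOC over solutions with makespan ≤ H_max. -/

import Mathlib

private lemma stmt18_single {V : Type*} [DecidableEq V] (H : ℕ) (f : ℕ → V) (gv : V)
    (hH : f H = gv) (hstay : ∀ ℓ < H, f ℓ = gv → f (ℓ + 1) = gv) :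
    (∑ ℓ ∈ Finset.range H, (if f ℓ = gv then 0 else 1)) = sInf {ℓ : ℕ | f ℓ = gv} := by
  set S : Set ℕ := {ℓ : ℕ | f ℓ = gv} with hS
  have hne : S.Nonempty := ⟨H, hH⟩
  set m := sInf S with hm
  have hmH : m ≤ H := Nat.sInf_le hH
  have hafter : ∀ ℓ, m ≤ ℓ → ℓ ≤ H → f ℓ = gv := by
    intro ℓ
    induction ℓ with
    | zero =>
      intro h _
      have h0 : m = 0 := Nat.le_zero.mp h
      have hmem := Nat.sInf_mem hne
      rw [← hm, h0] at hmem
      exact hmem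
    | succ n ih =>
      intro h hn
      rcases Nat.lt_or_ge m (n+1) with h' | h'
      · exact hstay n (lt_of_lt_of_le (Nat.lt_succ_iff.mpr (le_refl n)) hn)
          (ih (Nat.lt_succ_iff.mp h') (le_trans (Nat.le_succ n) hn))
      · have : m = n + 1 := le_antisymm h h'
        rw [← this]; exact Nat.sInf_mem hne
  have key : ∀ ℓ ∈ Finset.range H, (if f ℓ = gv then (0:ℕ) else 1) = if ℓ < m then 1 else 0 := by
    intro ℓ hℓ
    rw [Finset.mem_range] at hℓ
    by_cases hc : ℓ < m
    · have : f ℓ ≠ gv := fun hfe => absurd (Nat.sInf_le hfe) (not_le.mpr hc)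
      simp [this, hc]
    · have : f ℓ = gv := hafter ℓ (not_lt.mp hc) hℓ.le
      simp [this, hc]
  rw [Finset.sum_congr rfl key, Finset.sum_boole]
  have : (Finset.range H).filter (· < m) = Finset.range m := by
    ext x
    simp only [Finset.mem_filter, Finset.mem_range]
    omega
  rw [this]
  simp

/-- Identification of the finite-horizon cost with the sum of costs: (a) for
any joint trajectory ending at the goals with the stay-at-goal property, the
finite-horizon cost `J_H` equals the sum of arrival times (SOC); (b) hence
the minima of `J_H` and of SOC over any set of such trajectories (e.g. the
conflict-free ones) coincide. -/
theorem stmt18 {V A : Type*} [Fintype A] [DecidableEq V]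
    (g : A → V) (γ : A → V → ℕ) (hγ0 : ∀ a, γ a (g a) = 0) (H : ℕ) :
    (∀ τ : A → ℕ → V, (∀ a, τ a H = g a) →
      (∀ a, ∀ ℓ < H, τ a ℓ = g a → τ a (ℓ + 1) = g a) →
      (∑ a : A, ((∑ ℓ ∈ Finset.range H, (if τ a ℓ = g a then 0 else 1)) + γ a (τ a H))) =
      ∑ a : A, sInf {ℓ : ℕ | τ a ℓ = g a}) ∧
    (∀ F : Set (A → ℕ → V),
      (∀ τ ∈ F, (∀ a, τ a H = g a) ∧
        (∀ a, ∀ ℓ < H, τ a ℓ = g a → τ a (ℓ + 1) = g a)) →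
      sInf ((fun τ : A → ℕ → V =>
          ∑ a : A, ((∑ ℓ ∈ Finset.range H, (if τ a ℓ = g a then 0 else 1)) + γ a (τ a H))) '' F) =
      sInf ((fun τ : A → ℕ → V => ∑ a : A, sInf {ℓ : ℕ | τ a ℓ = g a}) '' F)) := by
  have part1 : ∀ τ : A → ℕ → V, (∀ a, τ a H = g a) →
      (∀ a, ∀ ℓ < H, τ a ℓ = g a → τ a (ℓ + 1) = g a) →
      (∑ a : A, ((∑ ℓ ∈ Finset.range H, (if τ a ℓ = g a then 0 else 1)) + γ a (τ a H))) =
      ∑ a : A, sInf {ℓ : ℕ | τ a ℓ = g a} := by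
    intro τ hend hstay
    apply Finset.sum_congr rfl
    intro a _
    rw [hend a, hγ0 a, add_zero]
    exact stmt18_single H (τ a) (g a) (hend a) (hstay a)
  refine ⟨part1, fun F hF => ?_⟩
  congr 1
  apply Set.image_congr
  intro τ hτ
  exact part1 τ (hF τ hτ).1 (hF τ hτ).2
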